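/- Let S be a Cu-semigroup and let a, b ∈ S. Suppose there exists k ∈ ℕ such that (k+1)·λ(a) ≤ k·λ(b) for every functional λ on S. Then for every a' ∈ S with a' ≪ a there exists m ∈ ℕ with (m+1)·a' ≤ m·b. If moreover S is almost unperforated, then a ≤ b. -/

import Mathlib

open scoped ENNReal

/-- The (sequential) way-below relation: `a ≪ b` if for every increasing
sequence `f` with a supremum `s` such that `b ≤ s`, some `f n` dominates `a`. -/
def CuWayBelow {S : Type*} [Preorder S] (a b : S) : Prop :=
  ∀ f : ℕ → S, Monotone f → ∀ s : S, IsLUB (Set.range f) s → b ≤ s → ∃ n : ℕ, a ≤ f n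

/-- An abstract Cu-semigroup: a positively ordered monoid satisfying the
axioms (O1)-(O4). -/
structure IsCuSemigroup (S : Type*) [AddCommMonoid S] [PartialOrder S] : Prop where
  /-- addition is order-preserving -/
  add_le_add : ∀ a b c : S, a ≤ b → a + c ≤ b + c
  /-- `0` is the least element -/
  zero_le : ∀ a : S, 0 ≤ a
  /-- (O1) every increasing sequence has a supremum -/
  O1 : ∀ f : ℕ → S, Monotone f → ∃ s : S, IsLUB (Set.range f) s
  /-- (O2) every element is the supremum of a rapidly increasing sequence -/
  O2 : ∀ a : S, ∃ f : ℕ → S, (∀ n : ℕ, CuWayBelow (f n) (f (n + 1))) ∧ IsLUB (Set.range f) a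
  /-- (O3) way-below is additive -/
  O3 : ∀ a' a b' b : S, CuWayBelow a' a → CuWayBelow b' b → CuWayBelow (a' + b') (a + b)
  /-- (O4) suprema of increasing sequences are additive -/
  O4 : ∀ f g : ℕ → S, Monotone f → Monotone g → ∀ s t : S, IsLUB (Set.range f) s →
    IsLUB (Set.range g) t → IsLUB (Set.range (fun n => f n + g n)) (s + t)

/-- A functional on a Cu-semigroup: an additive, order-preserving map to
`[0,∞]` preserving `0` and suprema of increasing sequences. -/
structure IsCuFunctional {S : Type*} [AddCommMonoid S] [PartialOrder S] (l : S → ℝ≥0∞) : Prop where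
  map_zero : l 0 = 0
  map_add : ∀ a b : S, l (a + b) = l a + l b
  mono : ∀ a b : S, a ≤ b → l a ≤ l b
  map_lub : ∀ f : ℕ → S, Monotone f → ∀ s : S, IsLUB (Set.range f) s → l s = ⨆ n : ℕ, l (f n)

namespace Stmt15Aux

variable {S : Type*} [AddCommMonoid S] [PartialOrder S]
set_option linter.unusedSectionVars false

theorem wbLe {x y : S} (h : CuWayBelow x y) : x ≤ y := by
  obtain ⟨n, hn⟩ := h (fun _ => y) monotone_const y
    (by rw [Set.range_const]; exact isLUB_singleton) le_rfl
  exact hn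

theorem wbMono {x' x y y' : S} (h1 : x' ≤ x) (h : CuWayBelow x y) (h2 : y ≤ y') :
    CuWayBelow x' y' := by
  intro f hf s hs hys
  obtain ⟨n, hn⟩ := h f hf s hs (h2.trans hys)
  exact ⟨n, h1.trans hn⟩

theorem zeroWb (hS : IsCuSemigroup S) (x : S) : CuWayBelow 0 x :=
  fun _ _ _ _ _ => ⟨0, hS.zero_le _⟩

theorem addLeAdd (hS : IsCuSemigroup S) {a b c d : S} (h1 : a ≤ b) (h2 : c ≤ d) :
    a + c ≤ b + d := by
  calc a + c ≤ b + c := hS.add_le_add _ _ _ h1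
  _ = c + b := add_comm _ _
  _ ≤ d + b := hS.add_le_add _ _ _ h2
  _ = b + d := add_comm _ _

theorem leAddRight (hS : IsCuSemigroup S) (x t : S) : x ≤ x + t := by
  calc x = x + 0 := (add_zero x).symm
  _ ≤ x + t := addLeAdd hS le_rfl (hS.zero_le t)

theorem nsmulLe (hS : IsCuSemigroup S) {x y : S} (h : x ≤ y) (n : ℕ) : n • x ≤ n • y := by
  induction n with
  | zero => simp
  | succ k ih => rw [succ_nsmul, succ_nsmul]; exact addLeAdd hS ih h

theorem nsmulCoeffLe (hS : IsCuSemigroup S) {p q : ℕ} (h : p ≤ q) (x : S) :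
    p • x ≤ q • x := by
  have e : q • x = p • x + (q - p) • x := by
    rw [← add_nsmul]; congr 1; omega
  rw [e]; exact leAddRight hS _ _

theorem iterateIneq (hS : IsCuSemigroup S) {X Y t : S} (h : X + t ≤ Y + t) (j : ℕ) :
    j • X + t ≤ j • Y + t := by
  induction j with
  | zero => simp
  | succ i ih =>
      have e1 : (i+1) • X + t = X + (i • X + t) := by module
      have e2 : X + (i • Y + t) = (X + t) + i • Y := by module
      have e3 : (Y + t) + i • Y = (i+1) • Y + t := by module
      rw [e1]
      calc X + (i • X + t) ≤ X + (i • Y + t) := addLeAdd hS le_rfl ih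
      _ = (X + t) + i • Y := e2
      _ ≤ (Y + t) + i • Y := addLeAdd hS h le_rfl
      _ = (i+1) • Y + t := e3

theorem exists_rapid (hS : IsCuSemigroup S) (x : S) :
    ∃ f : ℕ → S, Monotone f ∧ IsLUB (Set.range f) x ∧
      ∀ n, CuWayBelow (f n) (f (n+1)) ∧ CuWayBelow (f n) x := by
  obtain ⟨f, hwb, hlub⟩ := hS.O2 x
  have hmono : Monotone f := monotone_nat_of_le_succ fun n => wbLe (hwb n)
  exact ⟨f, hmono, hlub, fun n =>
    ⟨hwb n, wbMono le_rfl (hwb n) (hlub.1 (Set.mem_range_self (n+1)))⟩⟩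

theorem wbLub (hS : IsCuSemigroup S) {z s : S} (hz : CuWayBelow z s) {f : ℕ → S}
    (hf : Monotone f) (hlub : IsLUB (Set.range f) s) : ∃ n, CuWayBelow z (f n) := by
  obtain ⟨h, hmono, hlubh, hh⟩ := exists_rapid hS s
  obtain ⟨m, hm⟩ := hz h hmono s hlubh le_rfl
  obtain ⟨n, hn⟩ := (hh (m+1)).1 f hf s hlub (wbLe (hh (m+2)).2)
  exact ⟨n, wbMono hm (hh m).1 hn⟩

theorem wbAddSplit (hS : IsCuSemigroup S) {z x y : S} (hz : CuWayBelow z (x + y)) :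
    ∃ x' y', CuWayBelow x' x ∧ CuWayBelow y' y ∧ z ≤ x' + y' := by
  obtain ⟨f, hfm, hflub, hf⟩ := exists_rapid hS x
  obtain ⟨g, hgm, hglub, hg⟩ := exists_rapid hS y
  have hsum : IsLUB (Set.range fun n => f n + g n) (x + y) :=
    hS.O4 f g hfm hgm x y hflub hglub
  obtain ⟨n, hn⟩ := hz _ (fun i j hij => addLeAdd hS (hfm hij) (hgm hij)) _ hsum le_rfl
  exact ⟨f n, g n, (hf n).2, (hg n).2, hn⟩

noncomputable def lamOf (M : S → ℝ≥0∞) (x : S) : ℝ≥0∞ :=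
  ⨆ z : {z : S // CuWayBelow z x}, M z.1

theorem le_lamOf (M : S → ℝ≥0∞) {z x : S} (h : CuWayBelow z x) : M z ≤ lamOf M x :=
  le_iSup (fun w : {z : S // CuWayBelow z x} => M w.1) ⟨z, h⟩

theorem lamOf_le (M : S → ℝ≥0∞) (hmono : ∀ u v : S, u ≤ v → M u ≤ M v) (x : S) :
    lamOf M x ≤ M x :=
  iSup_le fun z => hmono _ _ (wbLe z.2)

theorem lamOf_functional (hS : IsCuSemigroup S) (M : S → ℝ≥0∞) (h0 : M 0 = 0)
    (hadd : ∀ x y, M (x + y) = M x + M y)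
    (hmono : ∀ x y : S, x ≤ y → M x ≤ M y) : IsCuFunctional (lamOf M) := by
  have hne : ∀ x : S, Nonempty {z : S // CuWayBelow z x} := fun x => ⟨⟨0, zeroWb hS x⟩⟩
  constructor
  · apply le_antisymm
    · refine iSup_le fun z => ?_
      have hz0 : z.1 = 0 := le_antisymm (wbLe z.2) (hS.zero_le _)
      rw [hz0, h0]
    · exact zero_le
  · intro x y
    apply le_antisymm
    · refine iSup_le fun z => ?_
      obtain ⟨x', y', hx', hy', hle⟩ := wbAddSplit hS z.2
      calc M z.1 ≤ M (x' + y') := hmono _ _ hle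
      _ = M x' + M y' := hadd _ _
      _ ≤ lamOf M x + lamOf M y := add_le_add (le_lamOf M hx') (le_lamOf M hy')
    · haveI := hne x; haveI := hne y
      rw [lamOf, ENNReal.iSup_add]
      refine iSup_le fun z1 => ?_
      rw [lamOf, ENNReal.add_iSup]
      refine iSup_le fun z2 => ?_
      rw [← hadd]
      exact le_lamOf M (hS.O3 _ _ _ _ z1.2 z2.2)
  · intro u v huv
    exact iSup_le fun z => le_lamOf M (wbMono le_rfl z.2 huv)
  · intro f hf s hlub
    apply le_antisymm
    · refine iSup_le fun z => ?_
      obtain ⟨n, hn⟩ := wbLub hS z.2 hf hlub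
      exact le_trans (le_lamOf M hn) (le_iSup (fun n => lamOf M (f n)) n)
    · refine iSup_le fun n => ?_
      exact iSup_le fun z => le_lamOf M (wbMono le_rfl z.2 (hlub.1 (Set.mem_range_self n)))


/-! ### Bounded elements and partial states -/

def Bdd (b x : S) : Prop := ∃ n : ℕ, x ≤ n • b

theorem Bdd.zero' (b : S) : Bdd b 0 := ⟨0, by simp⟩

theorem Bdd.self' (b : S) : Bdd b b := ⟨1, by simp⟩

theorem Bdd.add' (hS : IsCuSemigroup S) {b x y : S} (hx : Bdd b x) (hy : Bdd b y) :
    Bdd b (x + y) := by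
  obtain ⟨n, hn⟩ := hx; obtain ⟨m, hm⟩ := hy
  exact ⟨n + m, by rw [add_nsmul]; exact addLeAdd hS hn hm⟩

theorem Bdd.nsmul' (hS : IsCuSemigroup S) {b x : S} (k : ℕ) (hx : Bdd b x) :
    Bdd b (k • x) := by
  obtain ⟨n, hn⟩ := hx
  exact ⟨n * k, by rw [mul_nsmul]; exact nsmulLe hS hn k⟩

theorem Bdd.mono' {b x y : S} (hxy : x ≤ y) (hy : Bdd b y) : Bdd b x := by
  obtain ⟨n, hn⟩ := hy; exact ⟨n, hxy.trans hn⟩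

/-- A "good" set of partial state data: `((x, y), r)` means the state assigns
value `r` to the formal difference `x - y` in the Grothendieck group. -/
structure Good (b : S) (R : Set ((S × S) × ℝ)) : Prop where
  bdd : ∀ p ∈ R, Bdd b p.1.1 ∧ Bdd b p.1.2
  zero : (((0 : S), (0 : S)), (0 : ℝ)) ∈ R
  base : ((b, (0 : S)), (1 : ℝ)) ∈ R
  addc : ∀ p q : (S × S) × ℝ, p ∈ R → q ∈ R →
    ((p.1.1 + q.1.1, p.1.2 + q.1.2), p.2 + q.2) ∈ R
  swapc : ∀ p : (S × S) × ℝ, p ∈ R → ((p.1.2, p.1.1), -p.2) ∈ R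
  mono : ∀ p q : (S × S) × ℝ, p ∈ R → q ∈ R →
    (∃ t, Bdd b t ∧ p.1.1 + q.1.2 + t ≤ q.1.1 + p.1.2 + t) → p.2 ≤ q.2

theorem Good.nsmulc {b : S} {R : Set ((S × S) × ℝ)} (hG : Good b R) (k : ℕ)
    {y1 y2 : S} {ρ : ℝ} (h : ((y1, y2), ρ) ∈ R) :
    ((k • y1, k • y2), (k : ℝ) * ρ) ∈ R := by
  induction k with
  | zero => simpa using hG.zero
  | succ i ih =>
      have h2 := hG.addc _ _ ih h
      have e1 : (i + 1) • y1 = i • y1 + y1 := succ_nsmul _ _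
      have e2 : (i + 1) • y2 = i • y2 + y2 := succ_nsmul _ _
      have e3 : ((i + 1 : ℕ) : ℝ) * ρ = (i : ℝ) * ρ + ρ := by push_cast; ring
      rw [e1, e2, e3]
      exact h2

theorem Good.le_zero' {b : S} {R : Set ((S × S) × ℝ)} (hG : Good b R)
    {y1 y2 : S} {ρ : ℝ} (h : ((y1, y2), ρ) ∈ R) {t : S} (ht : Bdd b t)
    (hrel : y1 + t ≤ y2 + t) : ρ ≤ 0 := by
  have := hG.mono _ _ h hG.zero ⟨t, ht, by simpa using hrel⟩
  simpa using this

theorem Good.nonneg' (hS : IsCuSemigroup S) {b : S} {R : Set ((S × S) × ℝ)}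
    (hG : Good b R) {x : S} {ρ : ℝ} (h : ((x, (0 : S)), ρ) ∈ R) : 0 ≤ ρ := by
  have := hG.mono _ _ hG.zero h ⟨0, Bdd.zero' b, by simpa using hS.zero_le x⟩
  simpa using this

theorem Good.val_unique {b : S} {R : Set ((S × S) × ℝ)} (hG : Good b R)
    {x : S} {ρ ρ' : ℝ} (h : ((x, (0 : S)), ρ) ∈ R) (h' : ((x, (0 : S)), ρ') ∈ R) :
    ρ = ρ' := by
  have h1 := hG.mono _ _ h h' ⟨0, Bdd.zero' b, by simp⟩
  have h2 := hG.mono _ _ h' h ⟨0, Bdd.zero' b, by simp⟩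
  linarith

theorem Good.val_mono {b : S} {R : Set ((S × S) × ℝ)} (hG : Good b R)
    {x y : S} {ρ ρ' : ℝ} (h : ((x, (0 : S)), ρ) ∈ R) (h' : ((y, (0 : S)), ρ') ∈ R)
    (hxy : x ≤ y) : ρ ≤ ρ' :=
  hG.mono _ _ h h' ⟨0, Bdd.zero' b, by simpa using hxy⟩

/-! ### The lower and upper cut sets for extending a state -/

def LowSet (b x : S) (R : Set ((S × S) × ℝ)) : Set ℝ :=
  { q | ∃ (y1 y2 : S) (ρ : ℝ) (A B : ℕ) (t : S), ((y1, y2), ρ) ∈ R ∧ Bdd b t ∧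
      y1 + A • x + t ≤ y2 + B • x + t ∧ A < B ∧ q = ρ / ((B : ℝ) - A) }

def HighSet (b x : S) (R : Set ((S × S) × ℝ)) : Set ℝ :=
  { q | ∃ (y1 y2 : S) (ρ : ℝ) (A B : ℕ) (t : S), ((y1, y2), ρ) ∈ R ∧ Bdd b t ∧
      y1 + A • x + t ≤ y2 + B • x + t ∧ B < A ∧ q = -ρ / ((A : ℝ) - B) }

theorem zero_mem_low (hS : IsCuSemigroup S) {b : S} {R : Set ((S × S) × ℝ)}
    (hG : Good b R) (x : S) : (0 : ℝ) ∈ LowSet b x R := by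
  refine ⟨0, 0, 0, 0, 1, 0, hG.zero, Bdd.zero' b, by simpa using hS.zero_le x,
    by omega, by norm_num⟩

theorem cb_mem_high (hS : IsCuSemigroup S) {b : S} {R : Set ((S × S) × ℝ)}
    (hG : Good b R) {x : S} {c : ℕ} (hx : x ≤ c • b) : ((c : ℝ)) ∈ HighSet b x R := by
  have h1 : ((c • b, (0 : S)), (c : ℝ) * 1) ∈ R := by
    simpa using hG.nsmulc c hG.base
  have h2 : (((0 : S), c • b), -((c : ℝ) * 1)) ∈ R := by
    simpa using hG.swapc _ h1
  refine ⟨0, c • b, -((c : ℝ) * 1), 1, 0, 0, h2, Bdd.zero' b, ?_, by omega, by norm_num⟩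
  simpa using hx

theorem low_le_high (hS : IsCuSemigroup S) {b x : S} {R : Set ((S × S) × ℝ)}
    (hG : Good b R) (hx : Bdd b x) {q q' : ℝ}
    (hq : q ∈ LowSet b x R) (hq' : q' ∈ HighSet b x R) : q ≤ q' := by
  obtain ⟨y1, y2, ρ, A, B, t, hmem, ht, hrel, hAB, rfl⟩ := hq
  obtain ⟨z1, z2, ρ', A', B', t', hmem', ht', hrel', hBA', rfl⟩ := hq'
  obtain ⟨d, rfl⟩ : ∃ d, B = A + (d + 1) := ⟨B - A - 1, by omega⟩
  obtain ⟨d', rfl⟩ : ∃ d', A' = B' + (d' + 1) := ⟨A' - B' - 1, by omega⟩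
  set D : ℕ := d + 1 with hD
  set D' : ℕ := d' + 1 with hD'
  -- scale the two relations and add them
  have h1 : D' • (y1 + A • x + t) ≤ D' • (y2 + (A + D) • x + t) := nsmulLe hS hrel D'
  have h2 : D • (z1 + (B' + D') • x + t') ≤ D • (z2 + B' • x + t') := nsmulLe hS hrel' D
  have h3 := addLeAdd hS h1 h2
  set C : ℕ := D' * A + D * (B' + D') with hC
  set T : S := C • x + (D' • t + D • t') with hT
  have e1 : D' • (y1 + A • x + t) + D • (z1 + (B' + D') • x + t')
      = (D' • y1 + D • z1) + T := by
    rw [hT, hC]; module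
  have e2 : D' • (y2 + (A + D) • x + t) + D • (z2 + B' • x + t')
      = (D' • y2 + D • z2) + T := by
    rw [hT, hC]; module
  rw [e1, e2] at h3
  have hmemc : ((D' • y1 + D • z1, D' • y2 + D • z2), (D' : ℝ) * ρ + (D : ℝ) * ρ') ∈ R :=
    hG.addc _ _ (hG.nsmulc D' hmem) (hG.nsmulc D hmem')
  have hTbdd : Bdd b T := by
    refine Bdd.add' hS (Bdd.nsmul' hS C hx) (Bdd.add' hS (Bdd.nsmul' hS D' ht)
      (Bdd.nsmul' hS D ht'))
  have hle0 : (D' : ℝ) * ρ + (D : ℝ) * ρ' ≤ 0 := hG.le_zero' hmemc hTbdd h3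
  have hDpos : (0 : ℝ) < D := by positivity
  have hD'pos : (0 : ℝ) < D' := by positivity
  have eA : ((A + D : ℕ) : ℝ) - (A : ℝ) = (D : ℝ) := by push_cast; ring
  have eB : ((B' + D' : ℕ) : ℝ) - (B' : ℝ) = (D' : ℝ) := by push_cast; ring
  rw [eA, eB, div_le_div_iff₀ hDpos hD'pos]
  nlinarith [hle0]


/-! ### Extending a good set by one element -/

def extR (R : Set ((S × S) × ℝ)) (x : S) (γ : ℝ) : Set ((S × S) × ℝ) :=
  { p | ∃ (y1 y2 : S) (ρ : ℝ) (n m : ℕ), ((y1, y2), ρ) ∈ R ∧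
      p = ((y1 + n • x, y2 + m • x), ρ + ((n : ℝ) - m) * γ) }

theorem subset_extR (R : Set ((S × S) × ℝ)) (x : S) (γ : ℝ) : R ⊆ extR R x γ := by
  rintro ⟨⟨p1, p2⟩, r⟩ hp
  exact ⟨p1, p2, r, 0, 0, hp, by simp⟩

theorem self_mem_extR {R : Set ((S × S) × ℝ)} (hG : Good b R) (x : S) (γ : ℝ) :
    ((x, (0 : S)), γ) ∈ extR R x γ :=
  ⟨0, 0, 0, 1, 0, hG.zero, by simp⟩

theorem ext_good (hS : IsCuSemigroup S) {b x : S} {R : Set ((S × S) × ℝ)}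
    (hG : Good b R) (hx : Bdd b x) {γ : ℝ}
    (hlow : ∀ q ∈ LowSet b x R, q ≤ γ) (hhigh : ∀ q ∈ HighSet b x R, γ ≤ q) :
    Good b (extR R x γ) := by
  constructor
  · rintro p ⟨y1, y2, ρ, n, m, hmem, rfl⟩
    obtain ⟨h1, h2⟩ := hG.bdd _ hmem
    exact ⟨Bdd.add' hS h1 (Bdd.nsmul' hS n hx), Bdd.add' hS h2 (Bdd.nsmul' hS m hx)⟩
  · exact ⟨0, 0, 0, 0, 0, hG.zero, by simp⟩
  · exact ⟨b, 0, 1, 0, 0, hG.base, by simp⟩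
  · rintro p q ⟨y1, y2, ρ, n, m, hmem, rfl⟩ ⟨z1, z2, ρ', n', m', hmem', rfl⟩
    refine ⟨y1 + z1, y2 + z2, ρ + ρ', n + n', m + m', hG.addc _ _ hmem hmem', ?_⟩
    simp only [Prod.mk.injEq]
    refine ⟨⟨by module, by module⟩, by push_cast; ring⟩
  · rintro p ⟨y1, y2, ρ, n, m, hmem, rfl⟩
    refine ⟨y2, y1, -ρ, m, n, hG.swapc _ hmem, ?_⟩
    simp only [Prod.mk.injEq]
    exact ⟨trivial, by push_cast; ring⟩
  · rintro p q ⟨y1, y2, ρ, n, m, hmem, rfl⟩ ⟨z1, z2, ρ', n', m', hmem', rfl⟩ ⟨t, ht, hrel⟩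
    -- combined element of R
    have hcomb : ((y1 + z2, y2 + z1), ρ + -ρ') ∈ R := hG.addc _ _ hmem (hG.swapc _ hmem')
    simp only at hrel ⊢
    set A : ℕ := n + m' with hA
    set B : ℕ := n' + m with hB
    have hrel2 : (y1 + z2) + A • x + ((0:ℕ) • x + t) ≤ (y2 + z1) + B • x + ((0:ℕ) • x + t) := by
      have eL : (y1 + n • x) + (z2 + m' • x) + t = (y1 + z2) + A • x + ((0:ℕ) • x + t) := by
        rw [hA]; module
      have eR : (z1 + n' • x) + (y2 + m • x) + t = (y2 + z1) + B • x + ((0:ℕ) • x + t) := by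
        rw [hB]; module
      rw [← eL, ← eR]; exact hrel
    have hgoal : ρ + -ρ' ≤ ((B : ℝ) - A) * γ → ρ + ((n : ℝ) - m) * γ ≤ ρ' + ((n' : ℝ) - m') * γ := by
      intro hh
      have eAB : (B : ℝ) - A = ((n' : ℝ) - m') - ((n : ℝ) - m) := by
        rw [hA, hB]; push_cast; ring
      rw [eAB] at hh; nlinarith [hh]
    apply hgoal
    rcases Nat.lt_trichotomy A B with hlt | heq | hgt
    · -- use LowSet
      have hmemlow : (ρ + -ρ') / ((B : ℝ) - A) ∈ LowSet b x R := by
        refine ⟨y1 + z2, y2 + z1, ρ + -ρ', A, B, (0:ℕ) • x + t, hcomb, ?_, hrel2, hlt, rfl⟩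
        exact Bdd.add' hS (Bdd.nsmul' hS 0 hx) ht
      have h1 := hlow _ hmemlow
      have hpos : (0 : ℝ) < (B : ℝ) - A := by
        have : (A : ℝ) < B := by exact_mod_cast hlt
        linarith
      calc ρ + -ρ' = ((ρ + -ρ') / ((B : ℝ) - A)) * ((B : ℝ) - A) := by
            field_simp
      _ ≤ γ * ((B : ℝ) - A) := by
            apply mul_le_mul_of_nonneg_right h1 (le_of_lt hpos)
      _ = ((B : ℝ) - A) * γ := mul_comm _ _
    · -- A = B : use le_zero'
      have hrel3 : (y1 + z2) + (B • x + t) ≤ (y2 + z1) + (B • x + t) := by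
        have eL : (y1 + z2) + A • x + ((0:ℕ) • x + t) = (y1 + z2) + (A • x + t) := by module
        have eR : (y2 + z1) + B • x + ((0:ℕ) • x + t) = (y2 + z1) + (B • x + t) := by module
        rw [eL, eR] at hrel2
        rw [heq] at hrel2
        exact hrel2
      have h0 : ρ + -ρ' ≤ 0 :=
        hG.le_zero' hcomb (Bdd.add' hS (Bdd.nsmul' hS B hx) ht) hrel3
      have : ((B : ℝ) - A) = 0 := by rw [heq]; ring
      rw [this, zero_mul]; exact h0
    · -- use HighSet
      have hmemhigh : -(ρ + -ρ') / ((A : ℝ) - B) ∈ HighSet b x R := by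
        refine ⟨y1 + z2, y2 + z1, ρ + -ρ', A, B, (0:ℕ) • x + t, hcomb, ?_, hrel2, hgt, rfl⟩
        exact Bdd.add' hS (Bdd.nsmul' hS 0 hx) ht
      have h1 := hhigh _ hmemhigh
      have hpos : (0 : ℝ) < (A : ℝ) - B := by
        have : (B : ℝ) < A := by exact_mod_cast hgt
        linarith
      have h2 : γ * ((A : ℝ) - B) ≤ -(ρ + -ρ') := by
        calc γ * ((A : ℝ) - B) ≤ (-(ρ + -ρ') / ((A : ℝ) - B)) * ((A : ℝ) - B) :=
              mul_le_mul_of_nonneg_right h1 (le_of_lt hpos)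
        _ = -(ρ + -ρ') := by field_simp
      nlinarith [h2]


/-! ### Zorn's lemma: a maximal good set is totally defined -/

theorem good_sUnion {b : S} {c : Set (Set ((S × S) × ℝ))} (hc : IsChain (· ⊆ ·) c)
    (hne : c.Nonempty) (hgood : ∀ R ∈ c, Good b R) : Good b (⋃₀ c) := by
  obtain ⟨R0, hR0⟩ := hne
  constructor
  · rintro p ⟨R, hR, hp⟩; exact (hgood R hR).bdd p hp
  · exact ⟨R0, hR0, (hgood R0 hR0).zero⟩
  · exact ⟨R0, hR0, (hgood R0 hR0).base⟩
  · rintro p q ⟨R1, hR1, hp⟩ ⟨R2, hR2, hq⟩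
    rcases hc.total hR1 hR2 with hss | hss
    · exact ⟨R2, hR2, (hgood R2 hR2).addc _ _ (hss hp) hq⟩
    · exact ⟨R1, hR1, (hgood R1 hR1).addc _ _ hp (hss hq)⟩
  · rintro p ⟨R, hR, hp⟩; exact ⟨R, hR, (hgood R hR).swapc _ hp⟩
  · rintro p q ⟨R1, hR1, hp⟩ ⟨R2, hR2, hq⟩ hrel
    rcases hc.total hR1 hR2 with hss | hss
    · exact (hgood R2 hR2).mono _ _ (hss hp) hq hrel
    · exact (hgood R1 hR1).mono _ _ hp (hss hq) hrel

theorem exists_total_good (hS : IsCuSemigroup S) {b : S} {R1 : Set ((S × S) × ℝ)}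
    (hG1 : Good b R1) :
    ∃ R, Good b R ∧ R1 ⊆ R ∧ ∀ x : S, Bdd b x → ∃ ρ : ℝ, ((x, (0 : S)), ρ) ∈ R := by
  obtain ⟨R, hsub, hmax⟩ := zorn_subset_nonempty {R | Good b R}
    (fun c hcsub hchain hcne => ⟨⋃₀ c, good_sUnion hchain hcne (fun r hr => hcsub hr),
      fun s hs => Set.subset_sUnion_of_mem hs⟩) R1 hG1
  have hGR : Good b R := hmax.1
  refine ⟨R, hGR, hsub, fun x hxB => ?_⟩
  by_contra hnot
  push_neg at hnot
  -- extend R by x, contradicting maximality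
  obtain ⟨cx, hcx⟩ := id hxB
  have hhighne : ((cx : ℝ)) ∈ HighSet b x R := cb_mem_high hS hGR hcx
  have hlowne : (0 : ℝ) ∈ LowSet b x R := zero_mem_low hS hGR x
  have hbdd : BddAbove (LowSet b x R) :=
    ⟨(cx : ℝ), fun q hq => low_le_high hS hGR hxB hq hhighne⟩
  set γ : ℝ := sSup (LowSet b x R) with hγ
  have hlow : ∀ q ∈ LowSet b x R, q ≤ γ := fun q hq => le_csSup hbdd hq
  have hhigh : ∀ q ∈ HighSet b x R, γ ≤ q := fun q hq =>
    csSup_le ⟨0, hlowne⟩ (fun p hp => low_le_high hS hGR hxB hp hq)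
  have hG' : Good b (extR R x γ) := ext_good hS hGR hxB hlow hhigh
  have hsub' : extR R x γ ⊆ R := hmax.2 hG' (subset_extR R x γ)
  exact hnot γ (hsub' (self_mem_extR hGR x γ))


/-! ### The initial good set and the key lower bound -/

def R0 (b : S) : Set ((S × S) × ℝ) :=
  { p | ∃ n m : ℕ, p = ((n • b, m • b), (n : ℝ) - m) }

theorem good_R0 (hS : IsCuSemigroup S) {b : S}
    (hA : ¬ ∃ w, Bdd b w ∧ b + w ≤ w) : Good b (R0 b) := by
  constructor
  · rintro p ⟨n, m, rfl⟩
    exact ⟨⟨n, le_rfl⟩, ⟨m, le_rfl⟩⟩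
  · exact ⟨0, 0, by simp⟩
  · exact ⟨1, 0, by simp⟩
  · rintro p q ⟨n, m, rfl⟩ ⟨n', m', rfl⟩
    refine ⟨n + n', m + m', ?_⟩
    simp only [Prod.mk.injEq]
    constructor
    · constructor
      · module
      · module
    · push_cast; ring
  · rintro p ⟨n, m, rfl⟩
    have he : -((n:ℝ) - m) = (m:ℝ) - n := by ring
    show ((m • b, n • b), -((n:ℝ) - m)) ∈ R0 b
    rw [he]
    exact ⟨m, n, rfl⟩
  · rintro p q ⟨n1, m1, rfl⟩ ⟨n2, m2, rfl⟩ ⟨t, ht, hrel⟩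
    simp only at hrel ⊢
    have hNat : n1 + m2 ≤ n2 + m1 := by
      by_contra hcon
      push_neg at hcon
      set N : ℕ := n1 + m2 with hN
      set Mm : ℕ := n2 + m1 with hMm
      have hrel2 : N • b + t ≤ Mm • b + t := by
        have eL : n1 • b + m2 • b + t = N • b + t := by rw [hN]; module
        have eR : n2 • b + m1 • b + t = Mm • b + t := by rw [hMm]; module
        rw [← eL, ← eR]; exact hrel
      have hw : b + (Mm • b + t) ≤ Mm • b + t := by
        calc b + (Mm • b + t) = (Mm + 1) • b + t := by module
        _ ≤ N • b + t := addLeAdd hS (nsmulCoeffLe hS (by omega) b) le_rfl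
        _ ≤ Mm • b + t := hrel2
      exact hA ⟨Mm • b + t, Bdd.add' hS ⟨Mm, le_rfl⟩ ht, hw⟩
    have hcast : (n1 : ℝ) + m2 ≤ (n2 : ℝ) + m1 := by exact_mod_cast hNat
    linarith

theorem high_R0_ge_one (hS : IsCuSemigroup S) {a' b : S} {c' : ℕ} (ha'b : a' ≤ c' • b)
    (hA : ¬ ∃ w, Bdd b w ∧ b + w ≤ w)
    (hno : ∀ m : ℕ, ¬ ((m + 1) • a' ≤ m • b))
    {q : ℝ} (hq : q ∈ HighSet b a' (R0 b)) : 1 ≤ q := by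
  obtain ⟨y1, y2, ρ, A, B, t, hmem, ht, hrel, hBA, rfl⟩ := hq
  obtain ⟨n, m, hnm⟩ := hmem
  have hy1 : y1 = n • b := congrArg (fun p => p.1.1) hnm
  have hy2 : y2 = m • b := congrArg (fun p => p.1.2) hnm
  have hρ : ρ = (n : ℝ) - m := congrArg (fun p => p.2) hnm
  subst hy1; subst hy2; subst hρ
  obtain ⟨c0, hc0⟩ := ht
  -- Step 1 : n ≤ m
  have hnm' : n ≤ m := by
    by_contra hcon
    push_neg at hcon
    have h1 : n • b + A • a' + t ≤ m • b + A • a' + t := by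
      calc n • b + A • a' + t ≤ m • b + B • a' + t := hrel
      _ ≤ m • b + A • a' + t :=
        addLeAdd hS (addLeAdd hS le_rfl (nsmulCoeffLe hS (le_of_lt hBA) a')) le_rfl
    set w : S := m • b + A • a' + t with hw
    have hbw : b + w ≤ w := by
      have e1 : b + w = (m + 1) • b + A • a' + t := by rw [hw]; module
      have e2 : (m + 1) • b + A • a' + t ≤ n • b + A • a' + t :=
        addLeAdd hS (addLeAdd hS (nsmulCoeffLe hS (by omega) b) le_rfl) le_rfl
      rw [e1]
      exact e2.trans h1
    exact hA ⟨w, Bdd.add' hS (Bdd.add' hS ⟨m, le_rfl⟩ (Bdd.nsmul' hS A ⟨c', ha'b⟩))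
      ⟨c0, hc0⟩, hbw⟩
  -- Step 2 : A + n ≤ B + m
  have hkey : A + n ≤ B + m := by
    by_contra hcon
    push_neg at hcon
    obtain ⟨e, hm⟩ : ∃ e, m = n + e := ⟨m - n, by omega⟩
    obtain ⟨d, hAe⟩ : ∃ d, A = B + (e + 1 + d) := ⟨A - B - e - 1, by omega⟩
    set D : ℕ := e + 1 + d with hD
    set t2 : S := B • a' + n • b + t with ht2
    have hstep : D • a' + t2 ≤ e • b + t2 := by
      have eL : D • a' + t2 = n • b + A • a' + t := by rw [ht2, hAe]; module
      have eR : e • b + t2 = m • b + B • a' + t := by rw [ht2, hm]; module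
      rw [eL, eR]; exact hrel
    have ht2b : t2 ≤ (c' * B + n + c0) • b := by
      have h1 : B • a' ≤ (c' * B) • b := by
        rw [mul_nsmul]; exact nsmulLe hS ha'b B
      calc t2 = B • a' + n • b + t := ht2
      _ ≤ (c' * B) • b + n • b + c0 • b := addLeAdd hS (addLeAdd hS h1 le_rfl) hc0
      _ = (c' * B + n + c0) • b := by module
    set ct : ℕ := c' * B + n + c0 with hct
    set j : ℕ := ct + 1 with hj
    have hiter : j • (D • a') + t2 ≤ j • (e • b) + t2 := iterateIneq hS hstep j
    have hPa : (D * j) • a' = j • (D • a') := mul_nsmul a' D j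
    have hQb : (e * j) • b = j • (e • b) := mul_nsmul b e j
    have hcoeff : e * j + ct + 1 ≤ D * j := by
      have h2 : j * (e + 1) ≤ j * D := Nat.mul_le_mul_left _ (by omega)
      have h3 : j * (e + 1) = e * j + j := by ring
      have h4 : j * D = D * j := by ring
      omega
    have hfin : (e * j + ct + 1) • a' ≤ (e * j + ct) • b := by
      calc (e * j + ct + 1) • a' ≤ (D * j) • a' := nsmulCoeffLe hS hcoeff a'
      _ = j • (D • a') := hPa
      _ ≤ j • (D • a') + t2 := leAddRight hS _ _
      _ ≤ j • (e • b) + t2 := hiter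
      _ ≤ (e * j) • b + ct • b := addLeAdd hS (le_of_eq hQb.symm) ht2b
      _ = (e * j + ct) • b := by module
    exact hno (e * j + ct) hfin
  -- conclude
  have hpos : (0 : ℝ) < (A : ℝ) - B := by
    have hc : (B : ℝ) < A := by exact_mod_cast hBA
    linarith
  rw [le_div_iff₀ hpos]
  have h1 : ((A : ℝ)) + n ≤ (B : ℝ) + m := by exact_mod_cast hkey
  nlinarith [h1]


/-! ### The main state construction -/

theorem main_state (hS : IsCuSemigroup S) {a' b : S} {c' : ℕ} (ha'b : a' ≤ c' • b)
    (hA : ¬ ∃ w, Bdd b w ∧ b + w ≤ w)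
    (hno : ∀ m : ℕ, ¬ ((m + 1) • a' ≤ m • b)) :
    ∃ M : S → ℝ≥0∞, M 0 = 0 ∧ (∀ x y, M (x + y) = M x + M y) ∧
      (∀ x y : S, x ≤ y → M x ≤ M y) ∧ M b ≤ 1 ∧ 1 ≤ M a' := by
  have hG0 : Good b (R0 b) := good_R0 hS hA
  -- the first extension, by a' with value β₀ = sInf (HighSet)
  have hhighne : ((c' : ℝ)) ∈ HighSet b a' (R0 b) := cb_mem_high hS hG0 ha'b
  have hlowne : (0 : ℝ) ∈ LowSet b a' (R0 b) := zero_mem_low hS hG0 a'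
  have hbddbelow : BddBelow (HighSet b a' (R0 b)) :=
    ⟨0, fun q hq => low_le_high hS hG0 ⟨c', ha'b⟩ hlowne hq⟩
  set β : ℝ := sInf (HighSet b a' (R0 b)) with hβ
  have hβlow : ∀ q ∈ LowSet b a' (R0 b), q ≤ β := fun q hq =>
    le_csInf ⟨_, hhighne⟩ (fun p hp => low_le_high hS hG0 ⟨c', ha'b⟩ hq hp)
  have hβhigh : ∀ q ∈ HighSet b a' (R0 b), β ≤ q := fun q hq => csInf_le hbddbelow hq
  have hβ1 : 1 ≤ β := le_csInf ⟨_, hhighne⟩ (fun q hq => high_R0_ge_one hS ha'b hA hno hq)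
  have hG1 : Good b (extR (R0 b) a' β) := ext_good hS hG0 ⟨c', ha'b⟩ hβlow hβhigh
  have ha'mem1 : ((a', (0 : S)), β) ∈ extR (R0 b) a' β := self_mem_extR hG0 a' β
  -- Zorn
  obtain ⟨R, hGR, hsub, htotal⟩ := exists_total_good hS hG1
  have ha'mem : ((a', (0 : S)), β) ∈ R := hsub ha'mem1
  -- define the state
  classical
  set val : S → ℝ := fun x => if h : ∃ ρ : ℝ, ((x, (0 : S)), ρ) ∈ R then h.choose else 0
    with hval
  have hvalspec : ∀ x : S, Bdd b x → ((x, (0 : S)), val x) ∈ R := by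
    intro x hx
    have h : ∃ ρ : ℝ, ((x, (0 : S)), ρ) ∈ R := htotal x hx
    simp only [hval, dif_pos h]
    exact h.choose_spec
  have hvaleq : ∀ {x : S} {ρ : ℝ}, Bdd b x → ((x, (0 : S)), ρ) ∈ R → val x = ρ :=
    fun {x ρ} hx hρ => hGR.val_unique (hvalspec x hx) hρ
  have hvalnonneg : ∀ x : S, Bdd b x → 0 ≤ val x :=
    fun x hx => hGR.nonneg' hS (hvalspec x hx)
  set M : S → ℝ≥0∞ := fun x => if Bdd b x then ENNReal.ofReal (val x) else ⊤ with hM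
  refine ⟨M, ?_, ?_, ?_, ?_, ?_⟩
  · -- M 0 = 0
    have h0 : val 0 = 0 := hvaleq (Bdd.zero' b) hGR.zero
    simp [hM, Bdd.zero' b, h0]
  · -- additive
    intro x y
    by_cases hx : Bdd b x
    · by_cases hy : Bdd b y
      · have hxy : Bdd b (x + y) := Bdd.add' hS hx hy
        have hmemadd : ((x + y, (0 : S)), val x + val y) ∈ R := by
          have := hGR.addc _ _ (hvalspec x hx) (hvalspec y hy)
          simpa using this
        have heq : val (x + y) = val x + val y := hvaleq hxy hmemadd
        simp only [hM, if_pos hx, if_pos hy, if_pos hxy, heq]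
        exact ENNReal.ofReal_add (hvalnonneg x hx) (hvalnonneg y hy)
      · have hxy : ¬ Bdd b (x + y) := fun h => hy (Bdd.mono' (by
          calc y ≤ y + x := leAddRight hS y x
          _ = x + y := add_comm _ _) h)
        simp [hM, if_neg hy, if_neg hxy]
    · have hxy : ¬ Bdd b (x + y) := fun h => hx (Bdd.mono' (leAddRight hS x y) h)
      simp [hM, if_neg hx, if_neg hxy]
  · -- monotone
    intro x y hxy
    by_cases hy : Bdd b y
    · have hx : Bdd b x := Bdd.mono' hxy hy
      have hle : val x ≤ val y := hGR.val_mono (hvalspec x hx) (hvalspec y hy) hxy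
      simp only [hM, if_pos hx, if_pos hy]
      exact ENNReal.ofReal_le_ofReal hle
    · simp only [hM, if_neg hy]
      exact le_top
  · -- M b ≤ 1
    have hb : val b = 1 := hvaleq (Bdd.self' b) hGR.base
    simp [hM, Bdd.self' b, hb]
  · -- 1 ≤ M a'
    have ha : val a' = β := hvaleq ⟨c', ha'b⟩ ha'mem
    have hBa' : Bdd b a' := ⟨c', ha'b⟩
    simp only [hM, if_pos hBa', ha]
    exact ENNReal.one_le_ofReal.mpr hβ1


/-! ### Putting everything together -/

theorem key_step (hS : IsCuSemigroup S) (a b : S)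
    (h : ∃ k : ℕ, ∀ lam : S → ℝ≥0∞, IsCuFunctional lam →
      (k + 1) • lam a ≤ k • lam b) :
    ∀ a' : S, CuWayBelow a' a → ∃ m : ℕ, (m + 1) • a' ≤ m • b := by
  obtain ⟨k, hk⟩ := h
  intro a' ha'
  classical
  -- Step 0 : the 0/∞ functional shows every way-below element of a is bounded by b
  set M0 : S → ℝ≥0∞ := fun x => if Bdd b x then 0 else ⊤ with hM0
  have hM0zero : M0 0 = 0 := by simp [hM0, Bdd.zero' b]
  have hM0add : ∀ x y, M0 (x + y) = M0 x + M0 y := by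
    intro x y
    by_cases hx : Bdd b x
    · by_cases hy : Bdd b y
      · simp [hM0, if_pos hx, if_pos hy, if_pos (Bdd.add' hS hx hy)]
      · have hxy : ¬ Bdd b (x + y) := fun hh => hy (Bdd.mono' (by
          calc y ≤ y + x := leAddRight hS y x
          _ = x + y := add_comm _ _) hh)
        simp [hM0, if_neg hy, if_neg hxy]
    · have hxy : ¬ Bdd b (x + y) := fun hh => hx (Bdd.mono' (leAddRight hS x y) hh)
      simp [hM0, if_neg hx, if_neg hxy]
  have hM0mono : ∀ x y : S, x ≤ y → M0 x ≤ M0 y := by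
    intro x y hxy
    by_cases hy : Bdd b y
    · simp [hM0, if_pos (Bdd.mono' hxy hy), if_pos hy]
    · simp [hM0, if_neg hy]
  have hfun0 : IsCuFunctional (lamOf M0) := lamOf_functional hS M0 hM0zero hM0add hM0mono
  have hlam0b : lamOf M0 b = 0 := by
    apply le_antisymm _ zero_le
    calc lamOf M0 b ≤ M0 b := lamOf_le M0 hM0mono b
    _ = 0 := by simp [hM0, Bdd.self' b]
  have hlam0a : lamOf M0 a = 0 := by
    have h1 := hk (lamOf M0) hfun0
    rw [hlam0b, smul_zero] at h1
    have h2 : (k + 1) • lamOf M0 a = 0 := le_antisymm h1 zero_le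
    rw [nsmul_eq_mul] at h2
    rcases mul_eq_zero.mp h2 with hc | hc
    · exfalso
      have : ((k + 1 : ℕ) : ℝ≥0∞) ≠ 0 := Nat.cast_ne_zero.mpr (Nat.succ_ne_zero k)
      exact this hc
    · exact hc
  have hBa' : Bdd b a' := by
    by_contra hna
    have h1 : M0 a' ≤ lamOf M0 a := le_lamOf M0 ha'
    rw [hlam0a] at h1
    have h2 : M0 a' = ⊤ := by simp [hM0, if_neg hna]
    rw [h2] at h1
    simp at h1
  obtain ⟨c', ha'b⟩ := hBa'
  -- Case A : b absorbed by some bounded element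
  by_cases hA : ∃ w, Bdd b w ∧ b + w ≤ w
  · obtain ⟨w, ⟨cw, hwb⟩, hbw⟩ := hA
    have hjb : ∀ j : ℕ, j • b + w ≤ w := by
      intro j
      induction j with
      | zero => simp
      | succ i ih =>
          have e1 : (i + 1) • b + w = b + (i • b + w) := by module
          rw [e1]
          calc b + (i • b + w) ≤ b + w := addLeAdd hS le_rfl ih
          _ ≤ w := hbw
    have hjb' : ∀ j : ℕ, j • b ≤ cw • b := by
      intro j
      calc j • b ≤ j • b + w := leAddRight hS _ _
      _ ≤ w := hjb j
      _ ≤ cw • b := hwb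
    refine ⟨cw, ?_⟩
    calc (cw + 1) • a' ≤ (cw + 1) • (c' • b) := nsmulLe hS ha'b (cw + 1)
    _ = (c' * (cw + 1)) • b := (mul_nsmul b c' (cw + 1)).symm
    _ ≤ cw • b := hjb' _
  · -- main case
    by_contra hno
    push_neg at hno
    have hno' : ∀ m : ℕ, ¬ ((m + 1) • a' ≤ m • b) := fun m hm => by
      have := hno m
      exact this hm
    obtain ⟨M, hMz, hMadd, hMmono, hMb, hMa'⟩ := main_state hS ha'b hA hno'
    have hfun : IsCuFunctional (lamOf M) := lamOf_functional hS M hMz hMadd hMmono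
    have h1 := hk (lamOf M) hfun
    have hb1 : lamOf M b ≤ 1 := (lamOf_le M hMmono b).trans hMb
    have ha1 : 1 ≤ lamOf M a := hMa'.trans (le_lamOf M ha')
    rw [nsmul_eq_mul, nsmul_eq_mul] at h1
    have h2 : ((k + 1 : ℕ) : ℝ≥0∞) * 1 ≤ ((k + 1 : ℕ) : ℝ≥0∞) * lamOf M a :=
      mul_le_mul_right ha1 _
    have h3 : ((k : ℕ) : ℝ≥0∞) * lamOf M b ≤ ((k : ℕ) : ℝ≥0∞) * 1 :=
      mul_le_mul_right hb1 _
    have h4 : ((k + 1 : ℕ) : ℝ≥0∞) ≤ ((k : ℕ) : ℝ≥0∞) := by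
      calc ((k + 1 : ℕ) : ℝ≥0∞) = ((k + 1 : ℕ) : ℝ≥0∞) * 1 := (mul_one _).symm
      _ ≤ ((k + 1 : ℕ) : ℝ≥0∞) * lamOf M a := h2
      _ ≤ ((k : ℕ) : ℝ≥0∞) * lamOf M b := h1
      _ ≤ ((k : ℕ) : ℝ≥0∞) * 1 := h3
      _ = ((k : ℕ) : ℝ≥0∞) := mul_one _
    have h5 : k + 1 ≤ k := by exact_mod_cast h4
    omega

end Stmt15Aux



/-- Let `S` be a Cu-semigroup and `a b ∈ S`.  If there is
`k ∈ ℕ` with `(k+1)•λ(a) ≤ k•λ(b)` for every functional `λ`, then every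
`a' ≪ a` satisfies `(m+1)•a' ≤ m•b` for some `m`; if moreover `S` is almost
unperforated, then `a ≤ b`. -/
theorem stmt15 {S : Type*} [AddCommMonoid S] [PartialOrder S]
    (hS : IsCuSemigroup S) (a b : S)
    (h : ∃ k : ℕ, ∀ lam : S → ℝ≥0∞, IsCuFunctional lam →
      (k + 1) • lam a ≤ k • lam b) :
    (∀ a' : S, CuWayBelow a' a → ∃ m : ℕ, (m + 1) • a' ≤ m • b) ∧
    ((∀ x y : S, (∃ k : ℕ, (k + 1) • x ≤ k • y) → x ≤ y) → a ≤ b) := by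
  have key := Stmt15Aux.key_step hS a b h
  refine ⟨key, fun hup => ?_⟩
  obtain ⟨f, hmono, hlub, hf⟩ := Stmt15Aux.exists_rapid hS a
  apply hlub.2
  rintro x ⟨n, rfl⟩
  exact hup (f n) b (key (f n) ((hf n).2))
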